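/- Let n ≥ 2 and let w 1, …, w (n−1) be real numbers with D := Σ_{t=1}^{n−1} (w t)² ≠ 0, and set C := Σ_{t=1}^{n−2} w t · w (t+1). Then for every initial value φ 0 ∈ ℝ, the sequence defined by φ (k+1) = (C + (w (n−1))² · φ k) / D converges to a limit. -/

import Mathlib

/-- Final phase of IMR(1): with `D = Σ_{t=1}^{n−1} (w t)² ≠ 0` and
`C = Σ_{t=1}^{n−2} w t · w (t+1)`, for every initial value the affine iteration
`φ (k+1) = (C + (w (n−1))² · φ k) / D` converges. -/
theorem imr1_final_phase_converges
    (n : ℕ) (hn : 2 ≤ n) (w : ℕ → ℝ)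
    (hD : (∑ t ∈ Finset.Icc 1 (n - 1), (w t) ^ 2) ≠ 0) :
    ∀ φ : ℕ → ℝ,
      (∀ k : ℕ, φ (k + 1) =
        ((∑ t ∈ Finset.Icc 1 (n - 2), w t * w (t + 1)) + (w (n - 1)) ^ 2 * φ k) /
          (∑ t ∈ Finset.Icc 1 (n - 1), (w t) ^ 2)) →
      ∃ c : ℝ, Filter.Tendsto φ Filter.atTop (nhds c) := by
  intro φ hφ
  set D : ℝ := ∑ t ∈ Finset.Icc 1 (n - 1), (w t) ^ 2 with hDdef
  set C : ℝ := ∑ t ∈ Finset.Icc 1 (n - 2), w t * w (t + 1) with hCdef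
  set a : ℝ := (w (n - 1)) ^ 2 with hadef
  have hn1 : n - 1 = (n - 2) + 1 := by omega
  have hsplit : D = (∑ t ∈ Finset.Icc 1 (n - 2), (w t) ^ 2) + a := by
    rw [hDdef, hn1, Finset.sum_Icc_succ_top (by omega : 1 ≤ n - 2 + 1)]
    rw [hadef, hn1]
  have hDnn : 0 ≤ D := Finset.sum_nonneg fun t _ => sq_nonneg _
  have hDpos : 0 < D := lt_of_le_of_ne hDnn (Ne.symm hD)
  have hann : 0 ≤ a := sq_nonneg _
  have hrest : 0 ≤ ∑ t ∈ Finset.Icc 1 (n - 2), (w t) ^ 2 :=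
    Finset.sum_nonneg fun t _ => sq_nonneg _
  have haD : a ≤ D := by linarith [hsplit, hrest]
  rcases eq_or_lt_of_le haD with heq | hlt
  · -- a = D : then the rest sum is 0, so C = 0 and φ is constant
    have hrest0 : ∑ t ∈ Finset.Icc 1 (n - 2), (w t) ^ 2 = 0 := by linarith
    have hw0 : ∀ t ∈ Finset.Icc 1 (n - 2), w t = 0 := by
      intro t ht
      have := (Finset.sum_eq_zero_iff_of_nonneg fun t _ => sq_nonneg (w t)).mp hrest0 t ht
      exact pow_eq_zero_iff (by norm_num) |>.mp this
    have hC0 : C = 0 := Finset.sum_eq_zero fun t ht => by rw [hw0 t ht, zero_mul]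
    have hconst : ∀ k, φ k = φ 0 := by
      intro k
      induction k with
      | zero => rfl
      | succ k ih =>
        rw [hφ k, hC0, heq, ih, zero_add]; field_simp
    refine ⟨φ 0, ?_⟩
    have : φ = fun _ => φ 0 := funext hconst
    rw [this]
    exact tendsto_const_nhds
  · -- a < D : contraction
    set r : ℝ := a / D with hrdef
    have hr0 : 0 ≤ r := div_nonneg hann hDnn
    have hr1 : r < 1 := (div_lt_one hDpos).mpr hlt
    set L : ℝ := C / (D - a) with hLdef
    have hDa : D - a ≠ 0 := by linarith
    have hLfix : L * D = C + a * L := by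
      field_simp [hLdef]
      have h : L * (D - a) = C := div_mul_cancel₀ C hDa
      linear_combination h
    have hkey : ∀ k, φ k - L = r ^ k * (φ 0 - L) := by
      intro k
      induction k with
      | zero => simp
      | succ k ih =>
        rw [hφ k, pow_succ]
        have : (C + a * φ k) / D - L = r * (φ k - L) := by
          rw [hrdef]
          field_simp
          linarith [hLfix]
        rw [this, ih]
        ring
    have hlim : Filter.Tendsto (fun k => L + r ^ k * (φ 0 - L)) Filter.atTop (nhds (L + 0 * (φ 0 - L))) := by
      exact Filter.Tendsto.const_add _ ((tendsto_pow_atTop_nhds_zero_of_lt_one hr0 hr1).mul_const _)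
    refine ⟨L, ?_⟩
    have hφeq : φ = fun k => L + r ^ k * (φ 0 - L) := by
      funext k
      have := hkey k
      linarith
    rw [hφeq]
    simpa using hlim
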